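/- arXiv:2605.03954 — 4 statements merged into one kernel-verified Lean document; each statement's English description precedes it below -/
import Mathlib

section
/- Given a support system (T, L, src, supp), define the SETAF S with arguments A = T ∪ {a_{ℓ,s} : ℓ ∈ L, s ∈ src(ℓ)} (auxiliary arguments disjoint from T) and attacks: ({a_{ℓ,s}}, s), ({a_{ℓ,s}}, a_{ℓ,s}) for each ℓ ∈ L and s ∈ src(ℓ), and (S, a_{ℓ,s}) for each S ∈ supp(ℓ,s). Then P ⊆ T is the unique maximal closed set of the support system if and only if P is a preferred extension of S; moreover S has exactly one preferred extension. -/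
/-- Conflict-freeness in a SETAF. -/
def SetafConflictFree {A : Type} (R : Set A → A → Prop) (E : Set A) : Prop :=
  ¬ ∃ S a, R S a ∧ S ⊆ E ∧ a ∈ E

/-- Defense in a SETAF. -/
def SetafDefends {A : Type} (R : Set A → A → Prop) (E : Set A) (a : A) : Prop :=
  ∀ S, R S a → ∃ S' ⊆ E, ∃ b ∈ S, R S' b

def SetafAdmissible {A : Type} (R : Set A → A → Prop) (E : Set A) : Prop :=
  SetafConflictFree R E ∧ ∀ a ∈ E, SetafDefends R E a

def SetafNaive {A : Type} (R : Set A → A → Prop) (E : Set A) : Prop :=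
  SetafConflictFree R E ∧ ∀ E', SetafConflictFree R E' → E ⊆ E' → E' = E

def SetafPreferred {A : Type} (R : Set A → A → Prop) (E : Set A) : Prop :=
  SetafAdmissible R E ∧ ∀ E', SetafAdmissible R E' → E ⊆ E' → E' = E

def SetafStable {A : Type} (R : Set A → A → Prop) (E : Set A) : Prop :=
  SetafConflictFree R E ∧ ∀ a ∉ E, ∃ S ⊆ E, R S a

/-- `P` is closed in the support system. -/
def Closed {L Fact : Type} (src : L → Set Fact)
    (supp : L → Fact → Set (Set Fact)) (P : Set Fact) : Prop :=
  ∀ ℓ, ∀ s ∈ P, s ∈ src ℓ → ∃ S ∈ supp ℓ s, S ⊆ P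

/-- Auxiliary arguments `a_{ℓ,s}` for `ℓ ∈ L` and `s ∈ src ℓ`. -/
def Aux {L Fact : Type} (src : L → Set Fact) : Type :=
  {p : L × Fact // p.2 ∈ src p.1}

/-- Arguments of the SETAF generated by a support system: the facts together
with the auxiliary arguments. -/
def Arg {L Fact : Type} (src : L → Set Fact) : Type :=
  Fact ⊕ Aux src

/-- Attacks of the SETAF generated by a support system: `({a_{ℓ,s}}, s)`,
`({a_{ℓ,s}}, a_{ℓ,s})`, and `(S, a_{ℓ,s})` for every `S ∈ supp ℓ s`. -/
def Att {L Fact : Type} (src : L → Set Fact) (supp : L → Fact → Set (Set Fact))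
    (S : Set (Arg src)) (x : Arg src) : Prop :=
  (∃ a : Aux src, S = {Sum.inr a} ∧ (x = Sum.inr a ∨ x = Sum.inl a.1.2)) ∨
  (∃ a : Aux src, ∃ U ∈ supp a.1.1 a.1.2, S = Sum.inl '' U ∧ x = Sum.inr a)

section Helpers

variable {L Fact : Type} (src : L → Set Fact) (supp : L → Fact → Set (Set Fact))

/-- The maximal closed set: union of all closed sets. -/
def MaxClosed : Set Fact := ⋃₀ {Q | Closed src supp Q}

lemma closed_maxClosed : Closed src supp (MaxClosed src supp) := by
  intro ℓ s hs hsrc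
  obtain ⟨Q, hQ, hsQ⟩ := hs
  obtain ⟨S, hS, hSQ⟩ := hQ ℓ s hsQ hsrc
  exact ⟨S, hS, hSQ.trans (Set.subset_sUnion_of_mem hQ)⟩

lemma closed_subset_maxClosed {Q : Set Fact} (hQ : Closed src supp Q) :
    Q ⊆ MaxClosed src supp := Set.subset_sUnion_of_mem hQ

lemma admissible_iff (E : Set (Arg src)) :
    SetafAdmissible (Att src supp) E ↔
      ∃ P : Set Fact, Closed src supp P ∧ E = Sum.inl '' P := by
  constructor
  · rintro ⟨hcf, hdef⟩
    have haux : ∀ a : Aux src, Sum.inr a ∉ E := by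
      intro a ha
      exact hcf ⟨{Sum.inr a}, Sum.inr a, Or.inl ⟨a, rfl, Or.inl rfl⟩,
        Set.singleton_subset_iff.2 ha, ha⟩
    refine ⟨{s | Sum.inl s ∈ E}, ?_, ?_⟩
    · intro ℓ s hs hsrc
      have hatt : Att src supp {Sum.inr ⟨(ℓ, s), hsrc⟩} (Sum.inl s) :=
        Or.inl ⟨⟨(ℓ, s), hsrc⟩, rfl, Or.inr rfl⟩
      obtain ⟨S', hS'E, b, hb, hbatt⟩ := hdef (Sum.inl s) hs _ hatt
      replace hb : b = Sum.inr ⟨(ℓ, s), hsrc⟩ := hb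
      subst hb
      rcases hbatt with ⟨a', hS', ha'⟩ | ⟨a', U, hU, hS', ha'⟩
      · rcases ha' with h | h
        · have := Sum.inr.inj h
          subst this
          subst hS'
          exact absurd (hS'E rfl) (haux _)
        · exact absurd h (by simp)
      · have := Sum.inr.inj ha'
        subst this
        subst hS'
        refine ⟨U, hU, fun u hu => ?_⟩
        exact hS'E ⟨u, hu, rfl⟩
    · ext x
      cases x with
      | inl s =>
        show Sum.inl s ∈ E ↔ ∃ x, x ∈ {s | Sum.inl s ∈ E} ∧ (Sum.inl x : Arg src) = Sum.inl s
        exact ⟨fun h => ⟨s, h, rfl⟩, fun ⟨x, hx, he⟩ => (Sum.inl.inj he) ▸ hx⟩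
      | inr a => exact ⟨fun h => absurd h (haux a), fun h => by obtain ⟨_, _, h⟩ := h; exact absurd h Sum.inl_ne_inr⟩
  · rintro ⟨P, hP, rfl⟩
    have hnoaux : ∀ a : Aux src, Sum.inr a ∉ Sum.inl '' P := by
      rintro a ⟨s, _, h⟩; exact Sum.inl_ne_inr h
    constructor
    · rintro ⟨S, x, hatt, hSE, hxE⟩
      rcases hatt with ⟨a, hS, _⟩ | ⟨a, U, _, _, hx⟩
      · exact hnoaux a (hSE (hS ▸ Set.mem_singleton _))
      · exact hnoaux a (hx ▸ hxE)
    · rintro x hx S hatt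
      obtain ⟨s, hsP, rfl⟩ := hx
      rcases hatt with ⟨a, hS, ha⟩ | ⟨a, U, _, _, hx⟩
      · rcases ha with h | h
        · exact absurd h (by simp)
        · have hs : s = a.1.2 := Sum.inl.inj h
          obtain ⟨U, hU, hUP⟩ := hP a.1.1 s hsP (hs ▸ a.2)
          refine ⟨Sum.inl '' U, Set.image_mono hUP, Sum.inr a,
            hS ▸ Set.mem_singleton _, Or.inr ⟨a, U, hs ▸ hU, rfl, rfl⟩⟩
      · exact absurd hx (by simp)

lemma preferred_iff (P : Set Fact) :
    (Closed src supp P ∧ ∀ Q, Closed src supp Q → Q ⊆ P) ↔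
      SetafPreferred (Att src supp) ((Sum.inl : Fact → Arg src) '' P) := by
  constructor
  · rintro ⟨hP, hmax⟩
    refine ⟨(admissible_iff src supp _).2 ⟨P, hP, rfl⟩, ?_⟩
    intro E' hE' hsub
    obtain ⟨Q, hQ, rfl⟩ := (admissible_iff src supp _).1 hE'
    have h1 : Q ⊆ P := hmax Q hQ
    have h2 : P ⊆ Q := (Set.image_subset_image_iff Sum.inl_injective).1 hsub
    rw [Set.Subset.antisymm h1 h2]
    exact rfl
  · rintro ⟨hadm, hmax⟩
    obtain ⟨Q, hQ, hEQ⟩ := (admissible_iff src supp _).1 hadm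
    have hPQ : P = Q := by
      have := Set.image_eq_image (f := (Sum.inl : Fact → Arg src))
        Sum.inl_injective (s := P) (t := Q)
      exact this.1 hEQ
    subst hPQ
    refine ⟨hQ, fun R hR => ?_⟩
    have hPR : Closed src supp (P ∪ R) := by
      intro ℓ s hs hsrc
      rcases hs with hs | hs
      · obtain ⟨S, hS, hSP⟩ := hQ ℓ s hs hsrc
        exact ⟨S, hS, hSP.trans Set.subset_union_left⟩
      · obtain ⟨S, hS, hSR⟩ := hR ℓ s hs hsrc
        exact ⟨S, hS, hSR.trans Set.subset_union_right⟩
    have hadm' : SetafAdmissible (Att src supp) (Sum.inl '' (P ∪ R)) :=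
      (admissible_iff src supp _).2 ⟨P ∪ R, hPR, rfl⟩
    have := hmax _ hadm' (Set.image_mono Set.subset_union_left)
    have heq : P ∪ R = P :=
      (Set.image_eq_image Sum.inl_injective).1 this
    intro r hr
    exact heq ▸ Set.mem_union_right P hr

end Helpers

/-- A subset `P` of the facts is the unique maximal closed set of the support
system iff its image is a preferred extension of the generated SETAF; moreover
the SETAF has exactly one preferred extension. -/
theorem stmt9 {L Fact : Type} [Fintype L] [Fintype Fact]
    (src : L → Set Fact) (supp : L → Fact → Set (Set Fact)) :
    (∀ P : Set Fact,
      (Closed src supp P ∧ ∀ Q, Closed src supp Q → Q ⊆ P) ↔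
        SetafPreferred (Att src supp) ((Sum.inl : Fact → Arg src) '' P)) ∧
    (∃! E : Set (Arg src), SetafPreferred (Att src supp) E) := by
  refine ⟨preferred_iff src supp, Sum.inl '' MaxClosed src supp, ?_, ?_⟩
  · exact (preferred_iff src supp _).1
      ⟨closed_maxClosed src supp, fun Q hQ => closed_subset_maxClosed src supp hQ⟩
  · intro E' hE'
    obtain ⟨Q, hQ, rfl⟩ := (admissible_iff src supp _).1 hE'.1
    have h := (preferred_iff src supp Q).2 hE'
    have : Q = MaxClosed src supp :=
      Set.Subset.antisymm (closed_subset_maxClosed src supp h.1)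
        (h.2 _ (closed_maxClosed src supp))
    rw [this]
    exact rfl
end

section
/- In the SETAF S built from a support system, a subset P ⊆ T is admissible if and only if P is closed (every s ∈ P ∩ src(ℓ) has a supporting set S ∈ supp(ℓ,s) with S ⊆ P). -/
/-- In the SETAF generated by a support system, a subset `P` of the facts is
admissible iff it is closed. -/
theorem stmt11 {L Fact : Type} [Fintype L] [Fintype Fact]
    (src : L → Set Fact) (supp : L → Fact → Set (Set Fact)) (P : Set Fact) :
    SetafAdmissible (Att src supp) ((Sum.inl : Fact → Arg src) '' P) ↔
      Closed src supp P := by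
  constructor
  · rintro ⟨-, hdef⟩ ℓ s hsP hsrc
    set a : Aux src := ⟨(ℓ, s), hsrc⟩
    have hatt : Att src supp {Sum.inr a} (Sum.inl s) :=
      Or.inl ⟨a, rfl, Or.inr rfl⟩
    obtain ⟨S', hS'sub, b, hb, hattb⟩ :=
      hdef (Sum.inl s) ⟨s, hsP, rfl⟩ {Sum.inr a} hatt
    have hb : b = Sum.inr a := hb
    subst hb
    rcases hattb with ⟨a', hS'eq, h | h⟩ | ⟨a', U, hU, hS'eq, heq⟩
    · -- S' = {inr a'} ⊆ inl '' P is impossible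
      exfalso
      have : (Sum.inr a' : Arg src) ∈ (Sum.inl : Fact → Arg src) '' P := by
        apply hS'sub; rw [hS'eq]; exact rfl
      obtain ⟨x, -, hx⟩ := this
      cases hx
    · exact absurd h (by simp)
    · have ha' : a' = a := by
        injection heq with h; exact h.symm
      subst ha'
      refine ⟨U, hU, fun u hu => ?_⟩
      have : (Sum.inl u : Arg src) ∈ (Sum.inl : Fact → Arg src) '' P :=
        hS'sub (hS'eq ▸ ⟨u, hu, rfl⟩)
      obtain ⟨x, hxP, hx⟩ := this
      injection hx with hx
      exact hx ▸ hxP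
  · intro hcl
    constructor
    · rintro ⟨S, x, hatt, hsub, hx⟩
      rcases hatt with ⟨a, hSeq, -⟩ | ⟨a, U, hU, hSeq, hxeq⟩
      · have : (Sum.inr a : Arg src) ∈ (Sum.inl : Fact → Arg src) '' P := by
          apply hsub; rw [hSeq]; exact rfl
        obtain ⟨y, -, hy⟩ := this
        cases hy
      · rw [hxeq] at hx
        obtain ⟨y, -, hy⟩ := hx
        cases hy
    · rintro x ⟨s, hsP, rfl⟩ S hatt
      rcases hatt with ⟨a, hSeq, h | h⟩ | ⟨a, U, hU, hSeq, hxeq⟩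
      · exact absurd h (by simp)
      · injection h with h
        obtain ⟨U, hU, hUP⟩ := hcl a.1.1 s hsP (h ▸ a.2)
        refine ⟨Sum.inl '' U, ?_, Sum.inr a, by rw [hSeq]; exact rfl,
          Or.inr ⟨a, U, h ▸ hU, rfl, rfl⟩⟩
        rintro y ⟨u, hu, rfl⟩
        exact ⟨u, hUP hu, rfl⟩
      · exact absurd hxeq (by simp)
end

section
/- If in a support system (T, L, src, supp) the maximal closed set P* satisfies: for every s ∈ P* and every ℓ with s ∈ src(ℓ), supp(ℓ,s) ∩ 𝒫(P*) ≠ ∅, and additionally every fact in T ∖ P* has been removed by pre-processing (i.e., T = P* after pre-processing), then in the resulting SETAF the set P* of non-self-attacking arguments is simultaneously the unique naive, the unique stable, and the unique preferred extension. -/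
section Helpers
variable {L Fact : Type} (src : L → Set Fact) (supp : L → Fact → Set (Set Fact))

lemma cf_sub_range {E : Set (Arg src)} (h : SetafConflictFree (Att src supp) E) :
    E ⊆ Set.range (Sum.inl : Fact → Arg src) := by
  intro x hx
  rcases x with s | a
  · exact ⟨s, rfl⟩
  · exfalso
    exact h ⟨{Sum.inr a}, Sum.inr a, Or.inl ⟨a, rfl, Or.inl rfl⟩,
      Set.singleton_subset_iff.mpr hx, hx⟩

lemma cf_range : SetafConflictFree (Att src supp)
    (Set.range (Sum.inl : Fact → Arg src)) := by
  rintro ⟨S, x, hatt, hS, hx⟩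
  rcases hatt with ⟨a, hSa, hxa⟩ | ⟨a, U, _, _, hxa⟩
  · have : Sum.inr a ∈ Set.range (Sum.inl : Fact → Arg src) := by
      apply hS; rw [hSa]; exact rfl
    rcases this with ⟨s, hs⟩; exact (Sum.inl_ne_inr hs).elim
  · rw [hxa] at hx
    rcases hx with ⟨s, hs⟩; exact (Sum.inl_ne_inr hs).elim

lemma adm_range (hpre : ∀ ℓ, ∀ s ∈ src ℓ, ∃ S ∈ supp ℓ s, S ⊆ (Set.univ : Set Fact)) :
    SetafAdmissible (Att src supp) (Set.range (Sum.inl : Fact → Arg src)) := by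
  refine ⟨cf_range src supp, ?_⟩
  rintro x ⟨s, rfl⟩ S hatt
  rcases hatt with ⟨a, hSa, hxa⟩ | ⟨a, U, _, _, hxa⟩
  · rcases hxa with h | h
    · exact absurd h (by simp)
    · obtain ⟨U, hU, _⟩ := hpre a.1.1 a.1.2 a.2
      refine ⟨Sum.inl '' U, ?_, Sum.inr a, by rw [hSa]; exact rfl,
        Or.inr ⟨a, U, hU, rfl, rfl⟩⟩
      rintro y ⟨u, _, rfl⟩; exact ⟨u, rfl⟩
  · exact absurd hxa (by simp)
end Helpers

/-- After pre-processing (every fact is supported within the database), the set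
of non-self-attacking arguments (the facts) is simultaneously the unique naive,
the unique stable, and the unique preferred extension of the generated SETAF. -/
theorem stmt12 {L Fact : Type} [Fintype L] [Fintype Fact]
    (src : L → Set Fact) (supp : L → Fact → Set (Set Fact))
    (hpre : ∀ ℓ, ∀ s ∈ src ℓ, ∃ S ∈ supp ℓ s, S ⊆ (Set.univ : Set Fact)) :
    (SetafNaive (Att src supp) (Set.range (Sum.inl : Fact → Arg src)) ∧
      ∀ E, SetafNaive (Att src supp) E → E = Set.range (Sum.inl : Fact → Arg src)) ∧
    (SetafStable (Att src supp) (Set.range (Sum.inl : Fact → Arg src)) ∧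
      ∀ E, SetafStable (Att src supp) E → E = Set.range (Sum.inl : Fact → Arg src)) ∧
    (SetafPreferred (Att src supp) (Set.range (Sum.inl : Fact → Arg src)) ∧
      ∀ E, SetafPreferred (Att src supp) E → E = Set.range (Sum.inl : Fact → Arg src)) := by
  
  have hcf := cf_range src supp
  have hadm := adm_range src supp hpre
  have hmax : ∀ E, SetafConflictFree (Att src supp) E →
      Set.range (Sum.inl : Fact → Arg src) ⊆ E →
      E = Set.range (Sum.inl : Fact → Arg src) :=
    fun E hE hsub => Set.Subset.antisymm (cf_sub_range src supp hE) hsub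
  have hstab : SetafStable (Att src supp) (Set.range (Sum.inl : Fact → Arg src)) := by
    refine ⟨hcf, ?_⟩
    intro x hx
    rcases x with s | a
    · exact absurd ⟨s, rfl⟩ hx
    · obtain ⟨U, hU, _⟩ := hpre a.1.1 a.1.2 a.2
      refine ⟨Sum.inl '' U, ?_, Or.inr ⟨a, U, hU, rfl, rfl⟩⟩
      rintro y ⟨u, _, rfl⟩; exact ⟨u, rfl⟩
  refine ⟨⟨⟨hcf, fun E' hE' hsub => hmax E' hE' hsub⟩, ?_⟩,
    ⟨hstab, ?_⟩,
    ⟨⟨hadm, fun E' hE' hsub => hmax E' hE'.1 hsub⟩, ?_⟩⟩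
  · rintro E ⟨hEcf, hEmax⟩
    exact (hEmax _ hcf (cf_sub_range src supp hEcf)).symm
  · rintro E ⟨hEcf, hEstab⟩
    apply Set.Subset.antisymm (cf_sub_range src supp hEcf)
    rintro x ⟨s, rfl⟩
    by_contra hx
    obtain ⟨S, hS, hatt⟩ := hEstab _ hx
    rcases hatt with ⟨a, hSa, _⟩ | ⟨a, U, _, _, hxa⟩
    · have : Sum.inr a ∈ E := hS (by rw [hSa]; exact rfl)
      rcases cf_sub_range src supp hEcf this with ⟨t, ht⟩
      exact (Sum.inl_ne_inr ht).elim
    · exact (Sum.inl_ne_inr hxa).elim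
  · rintro E ⟨hEadm, hEmax⟩
    exact (hEmax _ hadm (cf_sub_range src supp hEadm.1)).symm
end

section
/- In any SETAF, if E1 and E2 are admissible sets and E1 ∪ E2 is conflict-free, then E1 ∪ E2 is admissible; consequently, in the support-system SETAF where all admissible sets are subsets of T and the union of closed sets is closed, the union of all admissible sets is the unique preferred extension. -/
/-- In any SETAF the union of two admissible sets is admissible provided it is
conflict-free; consequently, in the SETAF generated by a support system the
union of all admissible sets is the unique preferred extension. -/
theorem stmt19 :
    (∀ (A : Type) (R : Set A → A → Prop) (E1 E2 : Set A),
      SetafAdmissible R E1 → SetafAdmissible R E2 →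
      SetafConflictFree R (E1 ∪ E2) → SetafAdmissible R (E1 ∪ E2)) ∧
    (∀ (L Fact : Type) (src : L → Set Fact) (supp : L → Fact → Set (Set Fact)),
      SetafPreferred (Att src supp) (⋃₀ {E : Set (Arg src) | SetafAdmissible (Att src supp) E}) ∧
      ∀ E, SetafPreferred (Att src supp) E →
        E = ⋃₀ {E : Set (Arg src) | SetafAdmissible (Att src supp) E}) := by
  have mono : ∀ (A : Type) (R : Set A → A → Prop) (E E' : Set A) (a : A),
      E ⊆ E' → SetafDefends R E a → SetafDefends R E' a := by
    intro A R E E' a hEE h S hS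
    obtain ⟨S', hS', b, hb, hRb⟩ := h S hS
    exact ⟨S', hS'.trans hEE, b, hb, hRb⟩
  constructor
  · intro A R E1 E2 h1 h2 hcf
    refine ⟨hcf, fun a ha => ?_⟩
    rcases ha with ha | ha
    · exact mono A R E1 _ a Set.subset_union_left (h1.2 a ha)
    · exact mono A R E2 _ a Set.subset_union_right (h2.2 a ha)
  · intro L Fact src supp
    set U : Set (Arg src) := ⋃₀ {E : Set (Arg src) | SetafAdmissible (Att src supp) E}
      with hU
    -- no conflict-free set contains an auxiliary argument
    have noaux : ∀ E : Set (Arg src), SetafConflictFree (Att src supp) E →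
        ∀ a : Aux src, Sum.inr a ∉ E := by
      intro E hE a ha
      exact hE ⟨{Sum.inr a}, Sum.inr a, Or.inl ⟨a, rfl, Or.inl rfl⟩,
        Set.singleton_subset_iff.mpr ha, ha⟩
    have hUadm : SetafAdmissible (Att src supp) U := by
      have hcf : SetafConflictFree (Att src supp) U := by
        rintro ⟨S, x, hatt, hSU, hxU⟩
        rcases hatt with ⟨a, hS, _⟩ | ⟨a, _, _, _, hx⟩
        · have : Sum.inr a ∈ U := hSU (by rw [hS]; exact Set.mem_singleton _)
          obtain ⟨E, hE, haE⟩ := this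
          exact noaux E hE.1 a haE
        · subst hx
          obtain ⟨E, hE, haE⟩ := hxU
          exact noaux E hE.1 a haE
      refine ⟨hcf, fun a ha => ?_⟩
      obtain ⟨E, hE, haE⟩ := ha
      exact mono _ _ E U a (fun x hx => ⟨E, hE, hx⟩) (hE.2 a haE)
    refine ⟨⟨hUadm, fun E' hE' hsub => ?_⟩, fun E hE => ?_⟩
    · exact subset_antisymm (fun x hx => ⟨E', hE', hx⟩) hsub
    · have hEU : E ⊆ U := fun x hx => ⟨E, hE.1, hx⟩
      exact (hE.2 U hUadm hEU).symm
end
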